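/- arXiv:1604.02984 — 2 statements merged into one kernel-verified Lean document; each statement's English description precedes it below -/
import Mathlib

section
/- For nonnegative integers M, define the (M+1)×(M+1) tridiagonal matrix A_M (indices 0..M) by a_{k,k} = 2(k+1)(M+1-k) - M - 2, a_{k-1,k} = k((k+1)(M+2-k) - M - 2), and a_{k,k-1} = M+1-k. Then det(λI - A_M) = ∏_{j=0}^{M} (λ - j(j+1)). -/
open Polynomial Finset

/-- The tridiagonal matrix `A_M` of size `(M+1) × (M+1)`. -/
noncomputable def A (M : ℕ) : Matrix (Fin (M+1)) (Fin (M+1)) ℝ := fun i j =>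
  if (i : ℕ) = (j : ℕ) then 2*(((i:ℕ):ℝ)+1)*((M:ℝ)+1-((i:ℕ):ℝ)) - M - 2
  else if (i : ℕ) + 1 = (j : ℕ) then
    ((j:ℕ):ℝ)*((((j:ℕ):ℝ)+1)*((M:ℝ)+2-((j:ℕ):ℝ)) - M - 2)
  else if (j : ℕ) + 1 = (i : ℕ) then (M:ℝ)+1-((i:ℕ):ℝ)
  else 0

/-- ℕ-indexed version of the entries of `A`. -/
noncomputable def aa (M i j : ℕ) : ℝ :=
  if i = j then 2*((i:ℝ)+1)*((M:ℝ)+1-(i:ℝ)) - M - 2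
  else if i + 1 = j then (j:ℝ)*(((j:ℝ)+1)*((M:ℝ)+2-(j:ℝ)) - M - 2)
  else if j + 1 = i then (M:ℝ)+1-(i:ℝ)
  else 0

/-- Entries of the lower-triangular matrix `L`. -/
noncomputable def ll (i j : ℕ) : ℝ :=
  if j ≤ i then (-1)^(i-j) / (Nat.factorial (i-j)) else 0

/-- Entries of the upper-bidiagonal matrix `T`. -/
noncomputable def tt (M i j : ℕ) : ℝ :=
  if i = j then (j:ℝ)*((j:ℝ)+1)
  else if i + 1 = j then ((j:ℝ))^2*((M:ℝ)+1-(j:ℝ))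
  else 0

noncomputable def Lmat (M : ℕ) : Matrix (Fin (M+1)) (Fin (M+1)) ℝ := fun i j => ll i j

noncomputable def Tmat (M : ℕ) : Matrix (Fin (M+1)) (Fin (M+1)) ℝ := fun i j => tt M i j

lemma A_apply (M : ℕ) (i j : Fin (M+1)) : A M i j = aa M i j := rfl

lemma ll_of_le {i j : ℕ} (h : j ≤ i) :
    ll i j = (-1)^(i-j) / (Nat.factorial (i-j)) := if_pos h

lemma ll_of_lt {i j : ℕ} (h : i < j) : ll i j = 0 := if_neg (by omega)

/-- The scalar identity at the heart of `A * L = L * T`. -/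
lemma final (M i j : ℕ) (hi : i ≤ M) (hj : j ≤ M) :
    (2*((i:ℝ)+1)*((M:ℝ)+1-(i:ℝ)) - (M:ℝ) - 2) * ll i j
    + (((i:ℝ)+1)*((((i:ℝ)+1)+1)*((M:ℝ)+2-((i:ℝ)+1)) - (M:ℝ) - 2)) * ll (i+1) j
    + (if 1 ≤ i then ((M:ℝ)+1-(i:ℝ)) * ll (i-1) j else 0)
    = ll i j * ((j:ℝ)*((j:ℝ)+1))
    + (if 1 ≤ j then ll i (j-1) * (((j:ℝ))^2*((M:ℝ)+1-(j:ℝ))) else 0) := by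
  rcases lt_or_ge i j with hij | hij
  · rcases eq_or_lt_of_le (Nat.succ_le_of_lt hij) with hj1 | hj1
    · -- j = i + 1
      subst hj1
      have g1 : ll i (i+1) = 0 := ll_of_lt (by omega)
      have g2 : ll (i+1) (i+1) = 1 := by
        rw [ll_of_le le_rfl]; simp
      have g3 : ll (i-1) (i+1) = 0 := ll_of_lt (by omega)
      have g4 : i + 1 - 1 = i := by omega
      have g5 : ll i i = 1 := by rw [ll_of_le le_rfl]; simp
      rw [g1, g2, g3, g4, g5, if_pos (show 1 ≤ i + 1 by omega)]
      have g6 : (if 1 ≤ i then ((M:ℝ)+1-(i:ℝ)) * 0 else 0) = 0 := by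
        split_ifs <;> ring
      rw [g6]
      push_cast
      ring
    · -- i + 1 < j
      have g1 : ll i j = 0 := ll_of_lt (by omega)
      have g2 : ll (i+1) j = 0 := ll_of_lt (by omega)
      have g3 : ll (i-1) j = 0 := ll_of_lt (by omega)
      have g4 : ll i (j-1) = 0 := ll_of_lt (by omega)
      rw [g1, g2, g3, g4]
      have g5 : (if 1 ≤ i then ((M:ℝ)+1-(i:ℝ)) * 0 else 0) = 0 := by
        split_ifs <;> ring
      have g6 : (if 1 ≤ j then (0:ℝ) * (((j:ℝ))^2*((M:ℝ)+1-(j:ℝ))) else 0) = 0 := by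
        split_ifs <;> ring
      rw [g5, g6]
      ring
  · -- j ≤ i
    rcases Nat.eq_zero_or_pos j with hjz | hjz
    · subst hjz
      rcases Nat.eq_zero_or_pos i with hiz | hiz
      · subst hiz
        have g1 : ll 0 0 = 1 := by rw [ll_of_le le_rfl]; simp
        have g2 : ll (0+1) 0 = -1 := by
          rw [ll_of_le (by omega)]; norm_num
        rw [g1, g2, if_neg (show ¬ (1 ≤ 0) by omega), if_neg (show ¬ (1 ≤ 0) by omega)]
        push_cast
        ring
      · obtain ⟨e, rfl⟩ : ∃ e, i = e + 1 := ⟨i - 1, by omega⟩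
        have he : (Nat.factorial e : ℝ) ≠ 0 := Nat.cast_ne_zero.2 (Nat.factorial_ne_zero e)
        have g1 : ll (e+1) 0 = (-1)^(e+1) / (Nat.factorial (e+1)) := by
          rw [ll_of_le (by omega)]; norm_num
        have g2 : ll (e+1+1) 0 = (-1)^(e+2) / (Nat.factorial (e+2)) := by
          rw [ll_of_le (by omega)]
          have : e + 1 + 1 - 0 = e + 2 := by omega
          rw [this]
        have g3 : ll (e+1-1) 0 = (-1)^e / (Nat.factorial e) := by
          rw [ll_of_le (by omega)]
          have : e + 1 - 1 - 0 = e := by omega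
          rw [this]
        rw [g1, g2, g3, if_pos (show 1 ≤ e + 1 by omega), if_neg (show ¬ (1 ≤ 0) by omega)]
        have hf1 : (Nat.factorial (e+1) : ℝ) = ((e:ℝ)+1) * (Nat.factorial e) := by
          rw [Nat.factorial_succ]; push_cast; ring
        have hf2 : (Nat.factorial (e+2) : ℝ) = ((e:ℝ)+2) * (((e:ℝ)+1) * (Nat.factorial e)) := by
          rw [show e + 2 = (e+1)+1 by omega, Nat.factorial_succ, Nat.factorial_succ]
          push_cast; ring
        rw [hf2, hf1]
        have h1 : ((e:ℝ)+1) ≠ 0 := by positivity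
        have h2 : ((e:ℝ)+2) ≠ 0 := by positivity
        push_cast
        field_simp
        ring
    · -- 1 ≤ j
      rcases eq_or_lt_of_le hij with hd0 | hd1
      · -- i = j
        subst hd0
        have g1 : ll j j = 1 := by rw [ll_of_le le_rfl]; simp
        have g2 : ll (j+1) j = -1 := by
          rw [ll_of_le (by omega)]
          have : j + 1 - j = 1 := by omega
          rw [this]; norm_num
        have g3 : ll (j-1) j = 0 := ll_of_lt (by omega)
        have g4 : ll j (j-1) = -1 := by
          rw [ll_of_le (by omega)]
          have : j - (j - 1) = 1 := by omega
          rw [this]; norm_num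
        rw [g1, g2, g3, g4, if_pos (show 1 ≤ j by omega), if_pos (show 1 ≤ j by omega)]
        ring
      · -- j < i : i = j + e + 1
        obtain ⟨e, rfl⟩ : ∃ e, i = j + e + 1 := ⟨i - j - 1, by omega⟩
        have he : (Nat.factorial e : ℝ) ≠ 0 := Nat.cast_ne_zero.2 (Nat.factorial_ne_zero e)
        have g1 : ll (j+e+1) j = (-1)^(e+1) / (Nat.factorial (e+1)) := by
          rw [ll_of_le (by omega)]
          have : j + e + 1 - j = e + 1 := by omega
          rw [this]
        have g2 : ll (j+e+1+1) j = (-1)^(e+2) / (Nat.factorial (e+2)) := by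
          rw [ll_of_le (by omega)]
          have : j + e + 1 + 1 - j = e + 2 := by omega
          rw [this]
        have g3 : ll (j+e+1-1) j = (-1)^e / (Nat.factorial e) := by
          rw [ll_of_le (by omega)]
          have : j + e + 1 - 1 - j = e := by omega
          rw [this]
        have g4 : ll (j+e+1) (j-1) = (-1)^(e+2) / (Nat.factorial (e+2)) := by
          rw [ll_of_le (by omega)]
          have : j + e + 1 - (j - 1) = e + 2 := by omega
          rw [this]
        rw [g1, g2, g3, g4, if_pos (show 1 ≤ j + e + 1 by omega), if_pos (show 1 ≤ j by omega)]
        have hf1 : (Nat.factorial (e+1) : ℝ) = ((e:ℝ)+1) * (Nat.factorial e) := by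
          rw [Nat.factorial_succ]; push_cast; ring
        have hf2 : (Nat.factorial (e+2) : ℝ) = ((e:ℝ)+2) * (((e:ℝ)+1) * (Nat.factorial e)) := by
          rw [show e + 2 = (e+1)+1 by omega, Nat.factorial_succ, Nat.factorial_succ]
          push_cast; ring
        rw [hf2, hf1]
        have h1 : ((e:ℝ)+1) ≠ 0 := by positivity
        have h2 : ((e:ℝ)+2) ≠ 0 := by positivity
        push_cast [Nat.cast_sub hjz]
        field_simp
        ring

/-- The key sum identity behind `A * L = L * T`. -/
lemma key (M i j : ℕ) (hi : i ≤ M) (hj : j ≤ M) :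
    ∑ k ∈ Finset.range (M+1), aa M i k * ll k j
      = ∑ k ∈ Finset.range (M+1), ll i k * tt M k j := by
  have expandL : ∀ k, aa M i k * ll k j =
      (if i = k then (2*((i:ℝ)+1)*((M:ℝ)+1-(i:ℝ)) - (M:ℝ) - 2) * ll k j else 0)
    + (if i + 1 = k then ((k:ℝ)*(((k:ℝ)+1)*((M:ℝ)+2-(k:ℝ)) - (M:ℝ) - 2)) * ll k j else 0)
    + (if k + 1 = i then ((M:ℝ)+1-(i:ℝ)) * ll k j else 0) := by
    intro k; unfold aa; split_ifs <;> first | (exfalso; omega) | ring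
  have expandR : ∀ k, ll i k * tt M k j =
      (if k = j then ll i k * ((j:ℝ)*((j:ℝ)+1)) else 0)
    + (if k + 1 = j then ll i k * (((j:ℝ))^2*((M:ℝ)+1-(j:ℝ))) else 0) := by
    intro k; unfold tt; split_ifs <;> first | (exfalso; omega) | ring
  rw [Finset.sum_congr rfl fun k _ => expandL k,
      Finset.sum_congr rfl fun k _ => expandR k,
      Finset.sum_add_distrib, Finset.sum_add_distrib, Finset.sum_add_distrib]
  have S1 : ∑ k ∈ Finset.range (M+1),
      (if i = k then (2*((i:ℝ)+1)*((M:ℝ)+1-(i:ℝ)) - (M:ℝ) - 2) * ll k j else 0)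
      = (2*((i:ℝ)+1)*((M:ℝ)+1-(i:ℝ)) - (M:ℝ) - 2) * ll i j := by
    rw [Finset.sum_ite_eq, if_pos (Finset.mem_range.2 (by omega))]
  have S2 : ∑ k ∈ Finset.range (M+1),
      (if i + 1 = k then ((k:ℝ)*(((k:ℝ)+1)*((M:ℝ)+2-(k:ℝ)) - (M:ℝ) - 2)) * ll k j else 0)
      = (((i:ℝ)+1)*((((i:ℝ)+1)+1)*((M:ℝ)+2-((i:ℝ)+1)) - (M:ℝ) - 2)) * ll (i+1) j := by
    rw [Finset.sum_ite_eq]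
    by_cases h : i + 1 ∈ Finset.range (M+1)
    · rw [if_pos h]; push_cast; ring
    · rw [if_neg h]
      have hiM : i = M := by
        simp only [Finset.mem_range] at h; omega
      have hz : ((i:ℝ)+1)*((((i:ℝ)+1)+1)*((M:ℝ)+2-((i:ℝ)+1)) - (M:ℝ) - 2) = 0 := by
        rw [hiM]; ring
      rw [hz, zero_mul]
  have S3 : ∑ k ∈ Finset.range (M+1),
      (if k + 1 = i then ((M:ℝ)+1-(i:ℝ)) * ll k j else 0)
      = (if 1 ≤ i then ((M:ℝ)+1-(i:ℝ)) * ll (i-1) j else 0) := by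
    rcases i with _ | i'
    · simp
    · rw [if_pos (by omega : 1 ≤ i' + 1)]
      have hc : ∀ k : ℕ, (k + 1 = i' + 1) = (k = i') := by
        intro k; simp
      simp only [hc]
      rw [Finset.sum_ite_eq', if_pos (Finset.mem_range.2 (by omega))]
      norm_num
  have S4 : ∑ k ∈ Finset.range (M+1),
      (if k = j then ll i k * ((j:ℝ)*((j:ℝ)+1)) else 0)
      = ll i j * ((j:ℝ)*((j:ℝ)+1)) := by
    rw [Finset.sum_ite_eq', if_pos (Finset.mem_range.2 (by omega))]
  have S5 : ∑ k ∈ Finset.range (M+1),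
      (if k + 1 = j then ll i k * (((j:ℝ))^2*((M:ℝ)+1-(j:ℝ))) else 0)
      = (if 1 ≤ j then ll i (j-1) * (((j:ℝ))^2*((M:ℝ)+1-(j:ℝ))) else 0) := by
    rcases j with _ | j'
    · simp
    · rw [if_pos (by omega : 1 ≤ j' + 1)]
      have hc : ∀ k : ℕ, (k + 1 = j' + 1) = (k = j') := by
        intro k; simp
      simp only [hc]
      rw [Finset.sum_ite_eq', if_pos (Finset.mem_range.2 (by omega))]
      norm_num
  rw [S1, S2, S3, S4, S5]
  exact final M i j hi hj

lemma AL_eq_LT (M : ℕ) : A M * Lmat M = Lmat M * Tmat M := by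
  ext i j
  rw [Matrix.mul_apply, Matrix.mul_apply]
  have h1 : ∑ k : Fin (M+1), A M i k * Lmat M k j
      = ∑ k ∈ Finset.range (M+1), aa M i k * ll k j :=
    Fin.sum_univ_eq_sum_range (fun k => aa M (i:ℕ) k * ll k (j:ℕ)) (M+1)
  have h2 : ∑ k : Fin (M+1), Lmat M i k * Tmat M k j
      = ∑ k ∈ Finset.range (M+1), ll i k * tt M k j :=
    Fin.sum_univ_eq_sum_range (fun k => ll (i:ℕ) k * tt M k (j:ℕ)) (M+1)
  rw [h1, h2]
  exact key M i j (by omega) (by omega)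

lemma L_blockTriangular (M : ℕ) : (Lmat M).BlockTriangular OrderDual.toDual := by
  intro i j h
  exact ll_of_lt (by exact_mod_cast h)

lemma T_blockTriangular (M : ℕ) : (Tmat M).BlockTriangular id := by
  intro i j h
  have : (j:ℕ) < (i:ℕ) := by exact_mod_cast h
  unfold Tmat tt
  rw [if_neg (by omega), if_neg (by omega)]

lemma L_det (M : ℕ) : (Lmat M).det = 1 := by
  rw [Matrix.det_of_lowerTriangular (Lmat M) (L_blockTriangular M)]
  have : ∀ i : Fin (M+1), Lmat M i i = 1 := by
    intro i
    unfold Lmat ll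
    rw [if_pos le_rfl]
    simp
  simp [this]

lemma charpoly_similar {n : Type*} [DecidableEq n] [Fintype n]
    (P B : Matrix n n ℝ) (hP : IsUnit P.det) :
    (P * B * P⁻¹).charpoly = B.charpoly := by
  have h1 : P * P⁻¹ = 1 := Matrix.mul_nonsing_inv P hP
  have hcomm : ∀ Q : Matrix n n ℝ[X], Q * Matrix.scalar n (X : ℝ[X])
      = Matrix.scalar n (X : ℝ[X]) * Q := fun Q =>
    (Matrix.scalar_commute (X : ℝ[X]) (fun r => Commute.all _ _) Q).symm
  have h2 : Matrix.charmatrix (P * B * P⁻¹)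
      = (C : ℝ →+* ℝ[X]).mapMatrix P * Matrix.charmatrix B * (C : ℝ →+* ℝ[X]).mapMatrix P⁻¹ := by
    unfold Matrix.charmatrix
    rw [Matrix.mul_sub, Matrix.sub_mul, map_mul, map_mul]
    congr 1
    · rw [hcomm, Matrix.mul_assoc, ← map_mul, h1, map_one, Matrix.mul_one]
  have h3 : ((C : ℝ →+* ℝ[X]).mapMatrix P).det * ((C : ℝ →+* ℝ[X]).mapMatrix P⁻¹).det = 1 := by
    rw [← Matrix.det_mul, ← map_mul, h1, map_one, Matrix.det_one]
  unfold Matrix.charpoly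
  rw [h2, Matrix.det_mul, Matrix.det_mul, mul_right_comm, h3, one_mul]

/-- `det (λ I - A_M) = ∏_{j=0}^{M} (λ - j(j+1))`. -/
theorem charpoly_A (M : ℕ) :
    (A M).charpoly = ∏ j ∈ Finset.range (M+1), (X - C ((j : ℝ) * ((j : ℝ)+1))) := by
  have hdet : IsUnit (Lmat M).det := by rw [L_det]; exact isUnit_one
  have hA : A M = Lmat M * Tmat M * (Lmat M)⁻¹ := by
    rw [← AL_eq_LT, Matrix.mul_assoc, Matrix.mul_nonsing_inv _ hdet, Matrix.mul_one]
  rw [hA, charpoly_similar _ _ hdet,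
    Matrix.charpoly_of_upperTriangular _ (T_blockTriangular M)]
  have hdiag : ∀ i : Fin (M+1), Tmat M i i = ((i:ℕ):ℝ) * (((i:ℕ):ℝ)+1) := by
    intro i; unfold Tmat tt; rw [if_pos rfl]
  calc ∏ i : Fin (M+1), (X - C (Tmat M i i))
      = ∏ i : Fin (M+1), (X - C (((i:ℕ):ℝ) * (((i:ℕ):ℝ)+1))) := by
        refine Finset.prod_congr rfl fun i _ => by rw [hdiag]
    _ = ∏ j ∈ Finset.range (M+1), (X - C ((j : ℝ) * ((j : ℝ)+1))) :=
        Fin.prod_univ_eq_prod_range (fun j => (X - C ((j : ℝ) * ((j : ℝ)+1)))) (M+1)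
end

section
/- The matrix A_M has exactly M+1 distinct eigenvalues, namely k(k+1) for k = 0, 1, ..., M, and each eigenvalue is simple (its eigenspace is one-dimensional). -/
open Finset

noncomputable def c (M k s : ℕ) : ℝ :=
  (-1)^s * (k.choose s) * ((k+s).choose s) / (M.choose s)

noncomputable def Q (M k x : ℕ) : ℝ :=
  ∑ s ∈ Finset.range (k+1), c M k s * (x.choose s)

noncomputable def w (M k : ℕ) : ℕ → ℝ := fun x => (-1)^x / (x.factorial) * Q M k x

-- (s+1) C(n,s+1) = (n-s) C(n,s)  over ℝ
lemma id1 (n s : ℕ) : ((s:ℝ)+1) * (n.choose (s+1)) = ((n:ℝ) - s) * (n.choose s) := by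
  rcases le_or_gt s n with h | h
  · have := Nat.choose_succ_right_eq n s
    have h2 : ((n.choose (s+1) * (s+1) : ℕ) : ℝ) = ((n.choose s * (n - s) : ℕ) : ℝ) := by
      rw [this]
    push_cast [Nat.cast_sub h] at h2
    linarith
  · rw [Nat.choose_eq_zero_of_lt h, Nat.choose_eq_zero_of_lt (by omega)]
    simp

-- (n+1) C(n,s) = (s+1) C(n+1,s+1)
lemma id2 (n s : ℕ) : ((n:ℝ)+1) * (n.choose s) = ((s:ℝ)+1) * ((n+1).choose (s+1)) := by
  have := Nat.add_one_mul_choose_eq n s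
  have h2 : (((n+1) * n.choose s : ℕ) : ℝ) = (((n+1).choose (s+1) * (s+1) : ℕ) : ℝ) := by
    rw [show (n+1) * n.choose s = (n+1).choose (s+1) * (s+1) from this]
  push_cast at h2
  linarith

-- (**) identity
lemma starstar (M x s : ℕ) :
    ((x:ℝ)+2)*((M:ℝ)-((x:ℝ)+1))*((x+1).choose s) - ((x:ℝ)+1)*((M:ℝ)-x)*(x.choose s)
    = -((s:ℝ)+1)*((s:ℝ)+2)*((x+1).choose (s+1)) + ((s:ℝ)+1)*((M:ℝ)-s)*((x+1).choose s) := by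
  have h1 : ((x:ℝ)+2) * ((x+1).choose s) = ((s:ℝ)+1) * ((x+2).choose (s+1)) := by
    have := id2 (x+1) s; push_cast at this ⊢; linarith
  have h2 : ((x:ℝ)+1) * (x.choose s) = ((s:ℝ)+1) * ((x+1).choose (s+1)) := id2 x s
  have h3 : ((s:ℝ)+1) * ((x+1).choose (s+1)) = ((x:ℝ)+1-s) * ((x+1).choose s) := by
    have := id1 (x+1) s; push_cast at this ⊢; linarith
  have h4 : (((x+2).choose (s+1) : ℕ) : ℝ) = ((x+1).choose s) + ((x+1).choose (s+1)) := by
    rw [show (x+2).choose (s+1) = (x+1).choose s + (x+1).choose (s+1) from Nat.choose_succ_succ (x+1) s]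
    push_cast; ring
  linear_combination ((M:ℝ)-(x:ℝ)-1) * h1 - ((M:ℝ)-(x:ℝ)) * h2 + ((s:ℝ)+1) * h3
    + ((M:ℝ)-(x:ℝ)-1) * ((s:ℝ)+1) * h4
lemma coeff_id (M k s : ℕ) (hs : s < k) (hk : k ≤ M) :
    c M k (s+1) * (((s:ℝ)+1) * ((M:ℝ)-s)) = - c M k s * ((k:ℝ)*((k:ℝ)+1) - (s:ℝ)*((s:ℝ)+1)) := by
  have hMs : (M.choose s : ℝ) ≠ 0 := by
    have := Nat.choose_pos (show s ≤ M by omega); positivity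
  have hMs1 : (M.choose (s+1) : ℝ) ≠ 0 := by
    have := Nat.choose_pos (show s+1 ≤ M by omega); positivity
  have e1 : ((s:ℝ)+1) * (k.choose (s+1)) = ((k:ℝ) - s) * (k.choose s) := id1 k s
  have e2 : ((s:ℝ)+1) * ((k+s+1).choose (s+1)) = ((k:ℝ)+s+1) * ((k+s).choose s) := by
    have := id2 (k+s) s; push_cast at this ⊢; linarith
  have e3 : ((s:ℝ)+1) * (M.choose (s+1)) = ((M:ℝ) - s) * (M.choose s) := id1 M s
  have key : (-1:ℝ)^(s+1) * (k.choose (s+1)) * ((k+s+1).choose (s+1)) * (((s:ℝ)+1)*((M:ℝ)-s)) * (M.choose s)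
      = -((-1:ℝ)^s * (k.choose s) * ((k+s).choose s)) * ((k:ℝ)*((k:ℝ)+1)-(s:ℝ)*((s:ℝ)+1)) * (M.choose (s+1)) := by
    apply mul_left_cancel₀ (show ((s:ℝ)+1) ≠ 0 by positivity)
    linear_combination (-((-1:ℝ)^s) * (((s:ℝ)+1)) * ((k+s+1).choose (s+1)) * ((M:ℝ)-s) * (M.choose s)) * e1
      + (-((-1:ℝ)^s) * (((k:ℝ)-s)) * (k.choose s) * ((M:ℝ)-s) * (M.choose s)) * e2
      + (((-1:ℝ)^s) * (k.choose s) * ((k+s).choose s) * ((k:ℝ)*((k:ℝ)+1)-(s:ℝ)*((s:ℝ)+1))) * e3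
  simp only [c]
  simp only [show k + (s+1) = k + s + 1 from rfl]
  rw [neg_mul, div_mul_eq_mul_div, div_mul_eq_mul_div, ← neg_div, div_eq_div_iff hMs1 hMs]
  linear_combination key

lemma Ediff (M k y : ℕ) :
    Q M k (y+1) - Q M k y = ∑ s ∈ Finset.range k, c M k (s+1) * (y.choose s) := by
  unfold Q
  rw [← Finset.sum_sub_distrib,
    Finset.sum_range_succ' (fun s => c M k s * (((y+1).choose s : ℕ):ℝ) - c M k s * ((y.choose s : ℕ):ℝ)) k]
  have h : ∀ s ∈ Finset.range k,
      c M k (s+1) * (((y+1).choose (s+1) : ℕ):ℝ) - c M k (s+1) * ((y.choose (s+1) : ℕ):ℝ)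
      = c M k (s+1) * (y.choose s) := by
    intro s _
    rw [show (y+1).choose (s+1) = y.choose s + y.choose (s+1) from Nat.choose_succ_succ y s]
    push_cast; ring
  rw [Finset.sum_congr rfl h]
  simp

lemma Hsucc (M k x : ℕ) (hk : k ≤ M) :
    (k:ℝ)*((k:ℝ)+1) * Q M k (x+1)
      = ((x:ℝ)+2)*((M:ℝ)-((x:ℝ)+1))*(Q M k (x+1) - Q M k (x+2))
        + ((x:ℝ)+1)*((M:ℝ)-(x:ℝ))*(Q M k (x+1) - Q M k x) := by
  have hE1 : Q M k (x+2) - Q M k (x+1) = ∑ s ∈ range k, c M k (s+1) * ((x+1).choose s) :=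
    Ediff M k (x+1)
  have hE0 : Q M k (x+1) - Q M k x = ∑ s ∈ range k, c M k (s+1) * (x.choose s) := Ediff M k x
  have step1 : (k:ℝ)*((k:ℝ)+1) * Q M k (x+1)
      = ∑ s ∈ range (k+1), (c M k s * ((k:ℝ)*((k:ℝ)+1) - (s:ℝ)*((s:ℝ)+1)) * ((x+1).choose s)
          + c M k s * ((s:ℝ)*((s:ℝ)+1)) * ((x+1).choose s)) := by
    unfold Q; rw [Finset.mul_sum]; exact Finset.sum_congr rfl fun s _ => by ring
  rw [step1, Finset.sum_add_distrib]
  have step2 : ∑ s ∈ range (k+1), c M k s * ((k:ℝ)*((k:ℝ)+1) - (s:ℝ)*((s:ℝ)+1)) * ((x+1).choose s)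
      = ∑ s ∈ range k, -(c M k (s+1) * (((s:ℝ)+1) * ((M:ℝ)-s))) * ((x+1).choose s) := by
    rw [Finset.sum_range_succ]
    rw [show c M k k * ((k:ℝ)*((k:ℝ)+1) - (k:ℝ)*((k:ℝ)+1)) * ((((x+1).choose k : ℕ)):ℝ) = 0 by ring,
      add_zero]
    exact Finset.sum_congr rfl fun s hs => by
      rw [coeff_id M k s (Finset.mem_range.mp hs) hk]; ring
  have step3 : ∑ s ∈ range (k+1), c M k s * ((s:ℝ)*((s:ℝ)+1)) * ((x+1).choose s)
      = ∑ s ∈ range k, c M k (s+1) * (((s:ℝ)+1)*((s:ℝ)+2)) * ((x+1).choose (s+1)) := by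
    have h : ∀ s ∈ range k,
        c M k (s+1) * ((((s+1):ℕ):ℝ)*((((s+1):ℕ):ℝ)+1)) * (((x+1).choose (s+1) : ℕ):ℝ)
        = c M k (s+1) * (((s:ℝ)+1)*((s:ℝ)+2)) * (((x+1).choose (s+1) : ℕ):ℝ) := by
      intro s _; push_cast; ring
    rw [Finset.sum_range_succ'
      (fun s => c M k s * ((s:ℝ)*((s:ℝ)+1)) * ((((x+1).choose s : ℕ)):ℝ)) k,
      Finset.sum_congr rfl h]
    norm_num
  rw [step2, step3, ← Finset.sum_add_distrib]
  have step4 : ∀ s ∈ range k,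
      -(c M k (s+1) * (((s:ℝ)+1) * ((M:ℝ)-s))) * ((x+1).choose s)
        + c M k (s+1) * (((s:ℝ)+1)*((s:ℝ)+2)) * ((x+1).choose (s+1))
      = ((x:ℝ)+2)*((M:ℝ)-((x:ℝ)+1)) * -(c M k (s+1) * ((x+1).choose s))
        + ((x:ℝ)+1)*((M:ℝ)-(x:ℝ)) * (c M k (s+1) * (x.choose s)) := by
    intro s _
    linear_combination (c M k (s+1)) * starstar M x s
  rw [Finset.sum_congr rfl step4, Finset.sum_add_distrib, ← Finset.mul_sum, ← Finset.mul_sum]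
  rw [show Q M k (x+1) - Q M k (x+2) = -(Q M k (x+2) - Q M k (x+1)) by ring, hE1, hE0]
  rw [Finset.sum_neg_distrib]

lemma Qzero (M k : ℕ) : Q M k 0 = 1 := by
  unfold Q
  rw [Finset.sum_range_succ' (fun s => c M k s * ((Nat.choose 0 s : ℕ):ℝ)) k]
  have h : ∀ s ∈ range k, c M k (s+1) * ((Nat.choose 0 (s+1) : ℕ):ℝ) = 0 := by
    intro s _; simp [Nat.choose_eq_zero_of_lt]
  rw [Finset.sum_congr rfl h]
  simp [c]


lemma H0 (M k : ℕ) (hk : k ≤ M) :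
    (k:ℝ)*((k:ℝ)+1) * Q M k 0 = (M:ℝ) * (Q M k 0 - Q M k 1) := by
  have hE : Q M k 1 - Q M k 0 = ∑ s ∈ range k, c M k (s+1) * ((Nat.choose 0 s : ℕ):ℝ) :=
    Ediff M k 0
  rcases Nat.eq_zero_or_pos k with hk0 | hk0
  · subst hk0
    have h1 : Q M 0 1 = Q M 0 0 := by simp at hE; linarith
    rw [h1]; push_cast; ring
  · have hM : 0 < M := lt_of_lt_of_le hk0 hk
    have hsum : ∑ s ∈ range k, c M k (s+1) * ((Nat.choose 0 s : ℕ):ℝ) = c M k 1 := by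
      rw [Finset.sum_eq_single 0]
      · simp
      · intro s _ hs
        rcases Nat.exists_eq_succ_of_ne_zero hs with ⟨t, rfl⟩
        simp [Nat.choose_eq_zero_of_lt]
      · intro h; simp at h; omega
    have hc1 : c M k 1 = -((k:ℝ)*((k:ℝ)+1))/(M:ℝ) := by
      simp only [c, Nat.choose_one_right, pow_one]
      push_cast
      ring
    have hQ1 : Q M k 1 - Q M k 0 = c M k 1 := by rw [hE, hsum]
    rw [Qzero] at hQ1 ⊢
    rw [hc1] at hQ1
    have hMne : (M:ℝ) ≠ 0 := by positivity
    field_simp at hQ1 ⊢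
    linarith

lemma row_zero (M k : ℕ) (hk : k ≤ M) :
    (M:ℝ) * w M k 0 + (M:ℝ) * w M k 1 = (k:ℝ)*((k:ℝ)+1) * w M k 0 := by
  have h := H0 M k hk
  unfold w
  norm_num [Nat.factorial]
  linarith

lemma row_succ (M k n : ℕ) (hk : k ≤ M) :
    ((M:ℝ)-n) * w M k n + (2*((n:ℝ)+2)*((M:ℝ)-n) - (M:ℝ) - 2) * w M k (n+1)
      + (((n:ℝ)+2)^2*((M:ℝ)-((n:ℝ)+1))) * w M k (n+2)
      = (k:ℝ)*((k:ℝ)+1) * w M k (n+1) := by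
  have h := Hsucc M k n hk
  have hF1 : (((n+1).factorial : ℕ):ℝ) ≠ 0 := by
    exact_mod_cast Nat.cast_ne_zero.mpr (n+1).factorial_ne_zero
  have hF2 : (((n+2).factorial : ℕ):ℝ) ≠ 0 := by
    exact_mod_cast Nat.cast_ne_zero.mpr (n+2).factorial_ne_zero
  have hF : ((n.factorial : ℕ):ℝ) ≠ 0 := by
    exact_mod_cast Nat.cast_ne_zero.mpr n.factorial_ne_zero
  have hn2 : ((n:ℝ)+2) ≠ 0 := by positivity
  have hn1 : ((n:ℝ)+1) ≠ 0 := by positivity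
  have fact2 : (((n+2).factorial : ℕ):ℝ) = ((n:ℝ)+2)*((n:ℝ)+1)*((n.factorial:ℕ):ℝ) := by
    rw [Nat.factorial_succ (n+1), Nat.factorial_succ n]; push_cast; ring
  have we0 : w M k n
      = ((-1:ℝ)^n * (((n:ℝ)+1)*((n:ℝ)+2)) * Q M k n) / (((n+2).factorial : ℕ):ℝ) := by
    unfold w; rw [fact2]; field_simp; try ring
  have we1 : w M k (n+1)
      = ((-1:ℝ)^n * (-((n:ℝ)+2)) * Q M k (n+1)) / (((n+2).factorial : ℕ):ℝ) := by
    unfold w; rw [fact2, Nat.factorial_succ n, pow_succ]; push_cast; field_simp; try ring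
  have we2 : w M k (n+2)
      = ((-1:ℝ)^n * Q M k (n+2)) / (((n+2).factorial : ℕ):ℝ) := by
    unfold w; rw [fact2, pow_succ, pow_succ]; field_simp; try ring
  have key : ((M:ℝ)-n)*(((n:ℝ)+1)*((n:ℝ)+2))*(Q M k n)
      + (2*((n:ℝ)+2)*((M:ℝ)-n) - (M:ℝ) - 2)*(-((n:ℝ)+2))*(Q M k (n+1))
      + (((n:ℝ)+2)^2*((M:ℝ)-((n:ℝ)+1)))*(Q M k (n+2))
      = (k:ℝ)*((k:ℝ)+1)*(-((n:ℝ)+2))*(Q M k (n+1)) := by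
    linear_combination (((n:ℝ)+2))*h
  rw [we0, we1, we2]
  simp only [← mul_div_assoc]
  rw [← add_div, ← add_div, div_eq_div_iff hF2 hF2]
  linear_combination ((-1:ℝ)^n * (((n+2).factorial:ℕ):ℝ)) * key

lemma sum_tri (N n : ℕ) (hn : n < N) (f1 f2 f3 : ℕ → ℝ) :
    (∑ m ∈ Finset.range N,
      (if n = m then f1 m else if n+1 = m then f2 m else if m+1 = n then f3 m else 0))
    = f1 n + (if n+1 < N then f2 (n+1) else 0) + (if 1 ≤ n then f3 (n-1) else 0) := by
  have hsum : ∀ m, (if n = m then f1 m else if n+1 = m then f2 m else if m+1 = n then f3 m else 0)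
      = (if m = n then f1 n else 0) + (if m = n+1 then f2 (n+1) else 0)
        + (if 1 ≤ n ∧ m = n-1 then f3 (n-1) else 0) := by
    intro m
    by_cases h1 : n = m
    · subst h1
      rw [if_pos rfl, if_pos rfl, if_neg (by omega), if_neg (by omega)]
      ring
    · by_cases h2 : n+1 = m
      · subst h2
        rw [if_neg h1, if_pos rfl, if_neg (by omega), if_pos rfl, if_neg (by omega)]
        ring
      · by_cases h3 : m+1 = n
        · have hm : m = n-1 := by omega
          rw [if_neg h1, if_neg h2, if_pos h3, if_neg (by omega), if_neg (by omega),
            if_pos ⟨by omega, hm⟩]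
          rw [hm]; ring
        · rw [if_neg h1, if_neg h2, if_neg h3, if_neg (by omega), if_neg (by omega),
            if_neg (by rintro ⟨ha, hb⟩; omega)]
          ring
  rw [Finset.sum_congr rfl (fun m _ => hsum m), Finset.sum_add_distrib, Finset.sum_add_distrib,
    Finset.sum_ite_eq' (Finset.range N) n (fun _ => f1 n),
    Finset.sum_ite_eq' (Finset.range N) (n+1) (fun _ => f2 (n+1))]
  have h3 : (∑ m ∈ Finset.range N, if 1 ≤ n ∧ m = n-1 then f3 (n-1) else 0)
      = if 1 ≤ n then f3 (n-1) else 0 := by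
    by_cases hn1 : 1 ≤ n
    · simp only [hn1, true_and]
      rw [Finset.sum_ite_eq' (Finset.range N) (n-1) (fun _ => f3 (n-1)),
        if_pos (Finset.mem_range.mpr (by omega : n-1 < N))]
      simp [hn1]
    · simp only [hn1, false_and, if_false, Finset.sum_const_zero]
  rw [h3, if_pos (Finset.mem_range.mpr hn)]
  simp [Finset.mem_range]

lemma mulVec_w (M k : ℕ) (hk : k ≤ M) :
    (A M).mulVec (fun i : Fin (M+1) => w M k i) = ((k:ℝ)*((k:ℝ)+1)) • (fun i : Fin (M+1) => w M k i) := by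
  funext i
  obtain ⟨n, hn⟩ := i
  show (∑ j : Fin (M+1), A M ⟨n, hn⟩ j * w M k j) = _
  have hsummand : ∀ j : Fin (M+1), A M ⟨n, hn⟩ j * w M k j
      = (fun m => if n = m then (2*((n:ℝ)+1)*((M:ℝ)+1-(n:ℝ)) - (M:ℝ) - 2) * w M k m
          else if n+1 = m then ((m:ℝ)*(((m:ℝ)+1)*((M:ℝ)+2-(m:ℝ)) - (M:ℝ) - 2)) * w M k m
          else if m+1 = n then ((M:ℝ)+1-(n:ℝ)) * w M k m else 0) (j : ℕ) := by
    intro j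
    simp only [A]
    split_ifs <;> ring
  have hstep : (∑ j : Fin (M+1), A M ⟨n, hn⟩ j * w M k j)
      = ∑ m ∈ Finset.range (M+1),
        (fun m => if n = m then (2*((n:ℝ)+1)*((M:ℝ)+1-(n:ℝ)) - (M:ℝ) - 2) * w M k m
          else if n+1 = m then ((m:ℝ)*(((m:ℝ)+1)*((M:ℝ)+2-(m:ℝ)) - (M:ℝ) - 2)) * w M k m
          else if m+1 = n then ((M:ℝ)+1-(n:ℝ)) * w M k m else 0) m := by
    rw [← Fin.sum_univ_eq_sum_range]
    exact Finset.sum_congr rfl fun j _ => hsummand j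
  rw [hstep, sum_tri _ _ hn]
  simp only [smul_eq_mul, Pi.smul_apply]
  cases n with
  | zero =>
    by_cases hM : 1 < M + 1
    · rw [if_pos hM, if_neg (by omega)]
      have rz := row_zero M k hk
      push_cast at rz ⊢
      linear_combination rz
    · have hM0 : M = 0 := by omega
      subst hM0
      have hk0 : k = 0 := by omega
      subst hk0
      rw [if_neg (by omega), if_neg (by omega)]
      norm_num
  | succ p =>
    have rs := row_succ M k p hk
    by_cases hM : p+1+1 < M+1
    · rw [if_pos hM, if_pos (by omega)]
      push_cast at rs ⊢
      linear_combination rs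
    · have hMp : M = p+1 := by omega
      subst hMp
      rw [if_neg (by omega), if_pos (by omega)]
      push_cast at rs ⊢
      linear_combination rs

lemma uniq (M : ℕ) (μ : ℝ) (u : Fin (M+1) → ℝ)
    (hu : (A M).mulVec u = μ • u) (h0 : u ⟨0, Nat.succ_pos M⟩ = 0) : u = 0 := by
  set u' : ℕ → ℝ := fun m => if h : m < M+1 then u ⟨m, h⟩ else 0 with hu'
  have row : ∀ n (hn : n < M+1),
      (2*((n:ℝ)+1)*((M:ℝ)+1-(n:ℝ)) - (M:ℝ) - 2) * u' n
        + (if n+1 < M+1 then (((n:ℝ)+1)*((((n:ℝ)+1)+1)*((M:ℝ)+2-((n:ℝ)+1)) - (M:ℝ) - 2)) * u' (n+1) else 0)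
        + (if 1 ≤ n then ((M:ℝ)+1-(n:ℝ)) * u' (n-1) else 0)
      = μ * u' n := by
    intro n hn
    have hrow := congrFun hu ⟨n, hn⟩
    have hsummand : ∀ j : Fin (M+1), A M ⟨n, hn⟩ j * u j
        = (fun m => if n = m then (2*((n:ℝ)+1)*((M:ℝ)+1-(n:ℝ)) - (M:ℝ) - 2) * u' m
            else if n+1 = m then ((m:ℝ)*(((m:ℝ)+1)*((M:ℝ)+2-(m:ℝ)) - (M:ℝ) - 2)) * u' m
            else if m+1 = n then ((M:ℝ)+1-(n:ℝ)) * u' m else 0) (j : ℕ) := by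
      intro j
      have : u' (j:ℕ) = u j := by
        rw [hu']; simp only [j.isLt, dif_pos]
      simp only [A, this]
      split_ifs <;> ring
    have hL : (A M).mulVec u ⟨n, hn⟩ = ∑ j : Fin (M+1), A M ⟨n, hn⟩ j * u j := rfl
    have hstep : (∑ j : Fin (M+1), A M ⟨n, hn⟩ j * u j)
        = ∑ m ∈ Finset.range (M+1),
          (fun m => if n = m then (2*((n:ℝ)+1)*((M:ℝ)+1-(n:ℝ)) - (M:ℝ) - 2) * u' m
            else if n+1 = m then ((m:ℝ)*(((m:ℝ)+1)*((M:ℝ)+2-(m:ℝ)) - (M:ℝ) - 2)) * u' m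
            else if m+1 = n then ((M:ℝ)+1-(n:ℝ)) * u' m else 0) m := by
      rw [← Fin.sum_univ_eq_sum_range]
      exact Finset.sum_congr rfl fun j _ => hsummand j
    rw [hL, hstep, sum_tri _ _ hn] at hrow
    have hun : u' n = u ⟨n, hn⟩ := by rw [hu']; simp only [hn, dif_pos]
    simp only [Pi.smul_apply, smul_eq_mul] at hrow
    rw [← hun] at hrow
    push_cast at hrow ⊢
    exact hrow
  have hzero : ∀ n, n < M+1 → u' n = 0 := by
    have key : ∀ n, n < M+1 → ∀ m, m ≤ n → u' m = 0 := by
      intro n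
      induction n with
      | zero =>
        intro _ m hm
        have : m = 0 := by omega
        subst this
        rw [hu']; simp only [Nat.succ_pos M, dif_pos]; exact h0
      | succ p ih =>
        intro hp m hm
        rcases Nat.lt_or_ge m (p+1) with hlt | hge
        · exact ih (by omega) m (by omega)
        · have hm' : m = p+1 := by omega
          subst hm'
          have hrow := row p (by omega)
          have h1 : u' p = 0 := ih (by omega) p le_rfl
          have h2 : (if 1 ≤ p then ((M:ℝ)+1-(p:ℝ)) * u' (p-1) else 0) = 0 := by
            by_cases h1p : 1 ≤ p
            · rw [if_pos h1p, ih (by omega) (p-1) (by omega), mul_zero]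
            · rw [if_neg h1p]
          rw [h1, h2, if_pos (by omega : p+1 < M+1)] at hrow
          have hcoef : (((p:ℝ)+1)*((((p:ℝ)+1)+1)*((M:ℝ)+2-((p:ℝ)+1)) - (M:ℝ) - 2)) ≠ 0 := by
            have hMp : (p:ℝ) < (M:ℝ) := by exact_mod_cast (by omega : p < M)
            have : (((p:ℝ)+1)*((((p:ℝ)+1)+1)*((M:ℝ)+2-((p:ℝ)+1)) - (M:ℝ) - 2))
                = ((p:ℝ)+1)^2 * ((M:ℝ)-(p:ℝ)) := by ring
            rw [this]
            have h1' : ((p:ℝ)+1)^2 > 0 := by positivity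
            have h2' : (M:ℝ)-(p:ℝ) > 0 := by linarith
            positivity
          have : (((p:ℝ)+1)*((((p:ℝ)+1)+1)*((M:ℝ)+2-((p:ℝ)+1)) - (M:ℝ) - 2)) * u' (p+1) = 0 := by
            linarith [hrow]
          exact (mul_eq_zero.mp this).resolve_left hcoef
    intro n hn; exact key n hn n le_rfl
  funext j
  obtain ⟨m, hm⟩ := j
  have := hzero m hm
  rw [hu'] at this
  simpa [hm] using this

lemma wzero (M k : ℕ) : w M k 0 = 1 := by
  unfold w; simp [Qzero]

lemma wvec_ne (M k : ℕ) : (fun i : Fin (M+1) => w M k i) ≠ 0 := by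
  intro h
  have := congrFun h ⟨0, Nat.succ_pos M⟩
  simp only [Pi.zero_apply] at this
  rw [wzero] at this
  norm_num at this

lemma ker_mem_iff (M : ℕ) (μ : ℝ) (x : Fin (M+1) → ℝ) :
    x ∈ LinearMap.ker ((A M - μ • 1).mulVecLin) ↔ (A M).mulVec x = μ • x := by
  rw [LinearMap.mem_ker, Matrix.mulVecLin_apply, Matrix.sub_mulVec, Matrix.smul_mulVec,
    Matrix.one_mulVec, sub_eq_zero]

/-- The eigenvalues of `A_M` are exactly `k(k+1)` for `k = 0, …, M`, and each
eigenvalue is simple: its eigenspace is one-dimensional. -/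
theorem eigenvalues_A (M : ℕ) :
    (∀ μ : ℝ, (∃ v : Fin (M+1) → ℝ, v ≠ 0 ∧ (A M).mulVec v = μ • v) ↔
       ∃ k ≤ M, μ = (k : ℝ) * ((k : ℝ) + 1)) ∧
    (∀ k ≤ M, Module.finrank ℝ
       ↥(LinearMap.ker ((A M - ((k : ℝ) * ((k : ℝ) + 1)) • 1).mulVecLin)) = 1) := by
  constructor
  · intro μ
    constructor
    · rintro ⟨u, hu0, huA⟩
      by_contra hcon
      push_neg at hcon
      set μs : Fin (M+2) → ℝ :=
        fun j => if (j:ℕ) < M+1 then (((j:ℕ)):ℝ)*((((j:ℕ)):ℝ)+1) else μ with hμs_def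
      set xs : Fin (M+2) → (Fin (M+1) → ℝ) :=
        fun j => if (j:ℕ) < M+1 then (fun i => w M ((j:ℕ)) i) else u with hxs_def
      have hmono : ∀ a b : ℕ, a < b → ((a:ℝ)*((a:ℝ)+1) < (b:ℝ)*((b:ℝ)+1)) := by
        intro a b hab
        have : (a:ℝ) < (b:ℝ) := by exact_mod_cast hab
        have ha : (0:ℝ) ≤ (a:ℝ) := Nat.cast_nonneg a
        nlinarith
      have hinj : Function.Injective μs := by
        intro a b hab
        simp only [hμs_def] at hab
        by_cases ha : (a:ℕ) < M+1 <;> by_cases hb : (b:ℕ) < M+1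
        · rw [if_pos ha, if_pos hb] at hab
          rcases Nat.lt_trichotomy (a:ℕ) (b:ℕ) with h | h | h
          · exact absurd hab (ne_of_lt (hmono _ _ h))
          · exact Fin.ext h
          · exact absurd hab.symm (ne_of_lt (hmono _ _ h))
        · rw [if_pos ha, if_neg hb] at hab
          exact absurd hab.symm (hcon (a:ℕ) (by omega))
        · rw [if_neg ha, if_pos hb] at hab
          exact absurd hab (hcon (b:ℕ) (by omega))
        · exact Fin.ext (by omega)
      have hvec : ∀ j : Fin (M+2),
          Module.End.HasEigenvector ((A M).mulVecLin) (μs j) (xs j) := by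
        intro j
        rw [Module.End.hasEigenvector_iff, Module.End.mem_eigenspace_iff]
        by_cases hj : (j:ℕ) < M+1
        · simp only [hμs_def, hxs_def, if_pos hj]
          refine ⟨?_, wvec_ne M (j:ℕ)⟩
          rw [Matrix.mulVecLin_apply]
          exact mulVec_w M (j:ℕ) (by omega)
        · simp only [hμs_def, hxs_def, if_neg hj]
          exact ⟨by rw [Matrix.mulVecLin_apply]; exact huA, hu0⟩
      have hli := Module.End.eigenvectors_linearIndependent' ((A M).mulVecLin) μs hinj xs hvec
      have hcard := hli.fintype_card_le_finrank
      rw [Module.finrank_pi ℝ] at hcard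
      simp only [Fintype.card_fin] at hcard
      omega
    · rintro ⟨k, hk, rfl⟩
      exact ⟨fun i => w M k i, wvec_ne M k, mulVec_w M k hk⟩
  · intro k hk
    set μ := (k:ℝ)*((k:ℝ)+1) with hμ
    set K := LinearMap.ker ((A M - μ • 1).mulVecLin) with hK
    have hle : Module.finrank ℝ K ≤ 1 := by
      set φ : K →ₗ[ℝ] ℝ := (LinearMap.proj ⟨0, Nat.succ_pos M⟩).comp K.subtype with hφdef
      have hφ : Function.Injective φ := by
        intro x y hxy
        apply Subtype.ext
        have hx := (ker_mem_iff M μ x.1).mp x.2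
        have hy := (ker_mem_iff M μ y.1).mp y.2
        have hsub : (A M).mulVec (x.1 - y.1) = μ • (x.1 - y.1) := by
          rw [Matrix.mulVec_sub, smul_sub, hx, hy]
        have h0 : (x.1 - y.1) ⟨0, Nat.succ_pos M⟩ = 0 := by
          have : x.1 (0 : Fin (M+1)) = y.1 (0 : Fin (M+1)) := hxy
          simp [this]
        have := uniq M μ (x.1 - y.1) hsub h0
        rw [sub_eq_zero] at this
        exact this
      calc Module.finrank ℝ K ≤ Module.finrank ℝ ℝ :=
            LinearMap.finrank_le_finrank_of_injective hφ
        _ = 1 := Module.finrank_self ℝ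
    have hge : 1 ≤ Module.finrank ℝ K := by
      have hmem : (fun i : Fin (M+1) => w M k i) ∈ K :=
        (ker_mem_iff M μ _).mpr (mulVec_w M k hk)
      have : Nontrivial K := by
        refine ⟨⟨⟨_, hmem⟩, 0, ?_⟩⟩
        intro hcontra
        exact wvec_ne M k (by simpa [Subtype.ext_iff] using hcontra)
      exact Module.finrank_pos_iff.mpr this
    omega
end
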